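/- Let p be a prime and A ⊆ F_p^n a set containing no nontrivial 3-term arithmetic progression (i.e., x + y = 2z with x,y,z ∈ A implies x = y = z). Then |A| ≤ 3·N(n,p,(p-1)n/3), where N(n,p,r) = #{α ∈ ℕ^n : α_i ≤ p-1 ∀i, Σα_i ≤ r}. -/

import Mathlib

open Finset Module Submodule


theorem exists_max_support {K ι : Type*} [Field K] [Fintype ι] [DecidableEq K]
    (W : Submodule K (ι → K)) :
    ∃ f ∈ W, finrank K W ≤ (Finset.univ.filter (fun i => f i ≠ 0)).card := by
  classical
  set P : ℕ → Prop := fun k => ∃ f ∈ W, (Finset.univ.filter (fun i => f i ≠ 0)).card = k with hP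
  have h0 : P 0 := ⟨0, W.zero_mem, by simp⟩
  set k := Nat.findGreatest P (Fintype.card ι) with hk
  obtain ⟨f, hfW, hfk⟩ : P k := Nat.findGreatest_spec (Nat.zero_le _) h0
  refine ⟨f, hfW, ?_⟩
  rw [hfk]
  by_contra hlt
  push_neg at hlt
  -- restriction map to the support of f
  set s : Finset ι := Finset.univ.filter (fun i => f i ≠ 0) with hs
  let E : W →ₗ[K] (↥(s : Set ι) → K) :=
    (LinearMap.funLeft K K Subtype.val).comp W.subtype
  have hrange : finrank K (LinearMap.range E) ≤ k := by
    calc finrank K (LinearMap.range E) ≤ finrank K (↥(s : Set ι) → K) :=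
          (LinearMap.range E).finrank_le
      _ = s.card := by
          rw [Module.finrank_pi]
          simp
      _ = k := hfk
  have hker : 0 < finrank K (LinearMap.ker E) := by
    have := LinearMap.finrank_range_add_finrank_ker E
    omega
  have : Nontrivial (LinearMap.ker E) := Module.nontrivial_of_finrank_pos hker
  obtain ⟨g, hg⟩ := exists_ne (0 : LinearMap.ker E)
  have hgW : ((g : W) : ι → K) ∈ W := (g : W).2
  have hgE : ∀ i ∈ s, ((g : W) : ι → K) i = 0 := by
    intro i hi
    have := g.2
    rw [LinearMap.mem_ker] at this
    exact congrFun this ⟨i, by simpa using hi⟩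
  have hgne : ((g : W) : ι → K) ≠ 0 := by
    intro h
    apply hg
    ext
    simpa using congrFun h _
  obtain ⟨t, ht⟩ : ∃ t, ((g : W) : ι → K) t ≠ 0 := by
    by_contra h; push_neg at h; exact hgne (funext h)
  have hts : t ∉ s := fun h => ht (hgE t h)
  set f' : ι → K := f + ((g : W) : ι → K) with hf'
  have hsub : insert t s ⊆ Finset.univ.filter (fun i => f' i ≠ 0) := by
    intro i hi
    rcases Finset.mem_insert.mp hi with rfl | his
    · have : f i = 0 := by
        by_contra h
        exact hts (by simp [hs, h])
      simp only [Finset.mem_filter, Finset.mem_univ, true_and, hf', Pi.add_apply, this, zero_add]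
      exact ht
    · have h1 : f i ≠ 0 := by simpa [hs] using his
      have h2 : ((g : W) : ι → K) i = 0 := hgE i his
      simp [hf', h2, h1]
  have hP' : P (Finset.univ.filter (fun i => f' i ≠ 0)).card :=
    ⟨f', W.add_mem hfW hgW, rfl⟩
  have hle : (Finset.univ.filter (fun i => f' i ≠ 0)).card ≤ k :=
    Nat.le_findGreatest (Finset.card_le_card (Finset.filter_subset _ _) |>.trans (by simp)) hP'
  have : k + 1 ≤ (Finset.univ.filter (fun i => f' i ≠ 0)).card := by
    calc k + 1 = s.card + 1 := by rw [hfk]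
      _ = (insert t s).card := (Finset.card_insert_of_notMem hts).symm
      _ ≤ _ := Finset.card_le_card hsub
  omega


variable {p n : ℕ}

def mF (p n : ℕ) (α : Fin n → Fin p) : (Fin n → ZMod p) → ZMod p :=
  fun x => ∏ i, x i ^ (α i : ℕ)

theorem mF_add (α : Fin n → Fin p) (x y : Fin n → ZMod p) :
    mF p n α (x + y) = ∑ b ∈ Fintype.piFinset (fun i => Finset.range ((α i : ℕ) + 1)),
      (∏ i, ((α i : ℕ).choose (b i) : ZMod p)) *
        ((∏ i, x i ^ b i) * (∏ i, y i ^ ((α i : ℕ) - b i))) := by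
  have h1 : mF p n α (x + y) =
      ∏ i, ∑ k ∈ Finset.range ((α i : ℕ) + 1),
        x i ^ k * y i ^ ((α i : ℕ) - k) * ((α i : ℕ).choose k : ZMod p) := by
    unfold mF
    refine Finset.prod_congr rfl fun i _ => ?_
    exact add_pow (x i) (y i) ((α i : ℕ))
  rw [h1, Finset.prod_univ_sum]
  refine Finset.sum_congr rfl fun b _ => ?_
  rw [Finset.prod_mul_distrib, Finset.prod_mul_distrib]
  ring

def slowF (p n : ℕ) : Finset (Fin n → Fin p) :=
  Finset.univ.filter (fun α : Fin n → Fin p => 3 * ∑ i, (α i : ℕ) ≤ (p - 1) * n)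

def trunc (hp : 0 < p) (k : ℕ) : Fin p := ⟨min k (p - 1), by omega⟩

theorem trunc_val (hp : 0 < p) {k : ℕ} (hk : k ≤ p - 1) : ((trunc hp k : Fin p) : ℕ) = k := by
  simp [trunc, Nat.min_eq_left hk]

theorem decomp_generator (hp : 0 < p) (α : Fin n → Fin p)
    (hα : 3 * ∑ i, (α i : ℕ) ≤ 2 * ((p - 1) * n)) :
    ∃ u v : (Fin n → Fin p) → (Fin n → ZMod p) → ZMod p,
      ∀ x y, mF p n α (x + y) =
        (∑ β ∈ slowF p n, mF p n β x * u β y) +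
        (∑ γ ∈ slowF p n, v γ x * mF p n γ y) := by
  classical
  set S := Fintype.piFinset (fun i => Finset.range ((α i : ℕ) + 1)) with hS
  have hmemS : ∀ b ∈ S, ∀ i, b i ≤ (α i : ℕ) := by
    intro b hb i
    have := Fintype.mem_piFinset.mp hb i
    simpa [Nat.lt_succ_iff] using this
  have hαle : ∀ i, (α i : ℕ) ≤ p - 1 := fun i => by
    have := (α i).isLt; omega
  set S1 := S.filter (fun b => 3 * ∑ i, b i ≤ (p - 1) * n) with hS1
  set S2 := S.filter (fun b => ¬ 3 * ∑ i, b i ≤ (p - 1) * n) with hS2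
  set F : (Fin n → ℕ) → (Fin n → ZMod p) → (Fin n → ZMod p) → ZMod p :=
    fun b x y => (∏ i, ((α i : ℕ).choose (b i) : ZMod p)) *
        ((∏ i, x i ^ b i) * (∏ i, y i ^ ((α i : ℕ) - b i))) with hF
  refine ⟨fun β y => ∑ b ∈ S1.filter (fun b => (fun i => trunc hp (b i)) = β),
      (∏ i, ((α i : ℕ).choose (b i) : ZMod p)) * ∏ i, y i ^ ((α i : ℕ) - b i),
    fun γ x => ∑ b ∈ S2.filter (fun b => (fun i => trunc hp ((α i : ℕ) - b i)) = γ),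
      (∏ i, ((α i : ℕ).choose (b i) : ZMod p)) * ∏ i, x i ^ b i, fun x y => ?_⟩
  rw [mF_add]
  have hsplit : ∑ b ∈ S, F b x y = (∑ b ∈ S1, F b x y) + (∑ b ∈ S2, F b x y) :=
    (Finset.sum_filter_add_sum_filter_not S _ _).symm
  rw [show (∑ b ∈ Fintype.piFinset (fun i => Finset.range ((α i : ℕ) + 1)),
      (∏ i, ((α i : ℕ).choose (b i) : ZMod p)) *
        ((∏ i, x i ^ b i) * (∏ i, y i ^ ((α i : ℕ) - b i)))) = ∑ b ∈ S, F b x y from rfl, hsplit]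
  congr 1
  · -- low-in-x side
    rw [← Finset.sum_fiberwise_of_maps_to (g := fun b => (fun i => trunc hp (b i)))
      (t := slowF p n) ?_ (fun b => F b x y)]
    · refine Finset.sum_congr rfl fun β _ => ?_
      rw [Finset.mul_sum]
      refine Finset.sum_congr rfl fun b hb => ?_
      obtain ⟨hb1, hb2⟩ := Finset.mem_filter.mp hb
      obtain ⟨hbS, _⟩ := Finset.mem_filter.mp hb1
      have hmx : mF p n β x = ∏ i, x i ^ b i := by
        rw [← hb2]
        unfold mF
        refine Finset.prod_congr rfl fun i _ => ?_
        rw [trunc_val hp ((hmemS b hbS i).trans (hαle i))]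
      rw [hmx, hF]
      ring
    · intro b hb
      obtain ⟨hbS, hblow⟩ := Finset.mem_filter.mp hb
      refine Finset.mem_filter.mpr ⟨Finset.mem_univ _, ?_⟩
      have : ∀ i, ((trunc hp (b i) : Fin p) : ℕ) = b i :=
        fun i => trunc_val hp ((hmemS b hbS i).trans (hαle i))
      simpa [this] using hblow
  · -- low-in-y side
    rw [← Finset.sum_fiberwise_of_maps_to
      (g := fun b => (fun i => trunc hp ((α i : ℕ) - b i)))
      (t := slowF p n) ?_ (fun b => F b x y)]
    · refine Finset.sum_congr rfl fun γ _ => ?_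
      rw [Finset.sum_mul]
      refine Finset.sum_congr rfl fun b hb => ?_
      obtain ⟨hb1, hb2⟩ := Finset.mem_filter.mp hb
      obtain ⟨hbS, _⟩ := Finset.mem_filter.mp hb1
      have hmy : mF p n γ y = ∏ i, y i ^ ((α i : ℕ) - b i) := by
        rw [← hb2]
        unfold mF
        refine Finset.prod_congr rfl fun i _ => ?_
        rw [trunc_val hp (le_trans (Nat.sub_le _ _) (hαle i))]
      rw [hmy, hF]
      ring
    · intro b hb
      obtain ⟨hbS, hbhigh⟩ := Finset.mem_filter.mp hb
      refine Finset.mem_filter.mpr ⟨Finset.mem_univ _, ?_⟩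
      have hval : ∀ i, ((trunc hp ((α i : ℕ) - b i) : Fin p) : ℕ) = (α i : ℕ) - b i :=
        fun i => trunc_val hp (le_trans (Nat.sub_le _ _) (hαle i))
      have hsum : ∑ i, ((α i : ℕ) - b i) = (∑ i, (α i : ℕ)) - ∑ i, b i := by
        rw [Finset.sum_tsub_distrib]
        intro i _
        exact hmemS b hbS i
      have hble : ∑ i, b i ≤ ∑ i, (α i : ℕ) :=
        Finset.sum_le_sum fun i _ => hmemS b hbS i
      simp only [hval, hsum]
      omega

def DsetF (p n : ℕ) : Finset (Fin n → Fin p) :=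
  Finset.univ.filter (fun α : Fin n → Fin p => 3 * ∑ i, (α i : ℕ) ≤ 2 * ((p - 1) * n))

theorem decomp (hp : 0 < p) (f : (Fin n → ZMod p) → ZMod p)
    (hf : f ∈ span (ZMod p) (mF p n '' (DsetF p n : Set (Fin n → Fin p)))) :
    ∃ u v : (Fin n → Fin p) → (Fin n → ZMod p) → ZMod p,
      ∀ x y, f (x + y) =
        (∑ β ∈ slowF p n, mF p n β x * u β y) +
        (∑ γ ∈ slowF p n, v γ x * mF p n γ y) := by
  induction hf using Submodule.span_induction with
  | mem g hg =>
    obtain ⟨α, hα, rfl⟩ := hg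
    exact decomp_generator hp α (by simpa [DsetF] using hα)
  | zero => exact ⟨0, 0, by simp⟩
  | add g h _ _ ihg ihh =>
    obtain ⟨u1, v1, h1⟩ := ihg
    obtain ⟨u2, v2, h2⟩ := ihh
    refine ⟨u1 + u2, v1 + v2, fun x y => ?_⟩
    simp only [Pi.add_apply, h1 x y, h2 x y, mul_add, add_mul, Finset.sum_add_distrib]
    ring
  | smul c g _ ihg =>
    obtain ⟨u, v, h1⟩ := ihg
    refine ⟨fun β => c • u β, fun γ => c • v γ, fun x y => ?_⟩
    simp only [Pi.smul_apply, smul_eq_mul, h1 x y, Finset.mul_sum, mul_add]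
    congr 1 <;> exact Finset.sum_congr rfl fun _ _ => by ring

theorem card_compl_Dset (hp : 0 < p) :
    (Finset.univ \ DsetF p n).card ≤ (slowF p n).card := by
  classical
  apply Finset.card_le_card_of_injOn (fun α i => (⟨p - 1 - (α i : ℕ), by omega⟩ : Fin p))
  · intro α hα
    have hα' : ¬ 3 * ∑ i, (α i : ℕ) ≤ 2 * ((p - 1) * n) := by
      simp only [Finset.mem_coe, DsetF, Finset.mem_sdiff, Finset.mem_filter, Finset.mem_univ, true_and] at hα
      exact hα
    refine Finset.mem_filter.mpr ⟨Finset.mem_univ _, ?_⟩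
    have hle : ∀ i, (α i : ℕ) ≤ p - 1 := fun i => by have := (α i).isLt; omega
    have hsum : ∑ i, (p - 1 - (α i : ℕ)) = (p - 1) * n - ∑ i, (α i : ℕ) := by
      rw [Finset.sum_tsub_distrib]
      · congr 1
        simp [Finset.sum_const, mul_comm]
      · exact fun i _ => hle i
    have hb : ∑ i, (α i : ℕ) ≤ (p - 1) * n := by
      calc ∑ i, (α i : ℕ) ≤ ∑ _i : Fin n, (p - 1) := Finset.sum_le_sum fun i _ => hle i
        _ = (p - 1) * n := by simp [Finset.sum_const, mul_comm]
    simp only [hsum]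
    omega
  · intro α _ β _ h
    funext i
    have := congrFun h i
    have h1 : p - 1 - (α i : ℕ) = p - 1 - (β i : ℕ) := by
      simpa using congrArg Fin.val this
    have ha := (α i).isLt
    have hb := (β i).isLt
    have h2 : (α i : ℕ) = (β i : ℕ) := by clear this h; omega
    exact Fin.ext h2




theorem span_mF_top [Fact p.Prime] :
    span (ZMod p) (Set.range (mF p n)) = ⊤ := by
  classical
  rw [eq_top_iff]
  intro f _
  have := MvPolynomial.map_restrict_dom_evalₗ (ZMod p) (Fin n)
  have hf : f ∈ (MvPolynomial.restrictDegree (Fin n) (ZMod p)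
      (Fintype.card (ZMod p) - 1)).map (MvPolynomial.evalₗ (ZMod p) (Fin n)) := by
    rw [this]; trivial
  obtain ⟨q, hq, rfl⟩ := Submodule.mem_map.mp hf
  rw [MvPolynomial.mem_restrictDegree] at hq
  have hcard : Fintype.card (ZMod p) = p := ZMod.card p
  have hdeg : ∀ s ∈ q.support, ∀ i, (s : (Fin n) →₀ ℕ) i < p := by
    intro s hs i
    have := hq s hs i
    have hp1 : 0 < p := (Fact.out : p.Prime).pos
    omega
  have hrw : MvPolynomial.evalₗ (ZMod p) (Fin n) q =
      ∑ s ∈ q.support.attach,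
        (MvPolynomial.coeff s.1 q) • mF p n (fun i => ⟨s.1 i, hdeg s.1 s.2 i⟩) := by
    ext e
    simp only [MvPolynomial.evalₗ_apply, Finset.sum_apply, Pi.smul_apply, smul_eq_mul]
    rw [MvPolynomial.eval_eq']
    rw [← Finset.sum_attach]
    rfl
  rw [hrw]
  exact Submodule.sum_mem _ fun s _ =>
    Submodule.smul_mem _ _ (Submodule.subset_span ⟨_, rfl⟩)


/-- Functions vanishing outside a finset `s`. -/
def suppSub (K : Type*) [Field K] {ι : Type*} (s : Finset ι) : Submodule K (ι → K) where
  carrier := {f | ∀ v, v ∉ s → f v = 0}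
  add_mem' := fun hf hg v hv => by simp [hf v hv, hg v hv]
  zero_mem' := fun v _ => rfl
  smul_mem' := fun c f hf v hv => by simp [hf v hv]

theorem card_le_finrank_suppSub {K ι : Type*} [Field K] [Fintype ι] [DecidableEq ι]
    (s : Finset ι) : s.card ≤ finrank K (suppSub K s) := by
  classical
  set e : ↥(s : Set ι) → (ι → K) := fun v => Pi.single (v : ι) (1 : K) with he
  have hind : LinearIndependent K e := by
    have := (Pi.basisFun K ι).linearIndependent
    have h2 : e = (Pi.basisFun K ι) ∘ Subtype.val := by
      funext v
      simp [he, Pi.basisFun_apply]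
    rw [h2]
    exact this.comp _ Subtype.val_injective
  have hle : span K (Set.range e)
      ≤ suppSub K s := by
    rw [span_le]
    rintro _ ⟨v, rfl⟩
    intro w hw
    simp only [he]
    have : (v : ι) ≠ w := fun h => hw (h ▸ v.2)
    simp [Pi.single_apply, this.symm]
  calc s.card = Fintype.card ↥(s : Set ι) := by simp
    _ = finrank K (span K (Set.range e)) :=
        (finrank_span_eq_card hind).symm
    _ ≤ finrank K (suppSub K s) := Submodule.finrank_mono hle


theorem ellenberg_gijswijt {p : ℕ} (hp : p.Prime) {n : ℕ}
    (A : Finset (Fin n → ZMod p))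
    (hAP : ∀ x ∈ A, ∀ y ∈ A, ∀ z ∈ A, x + y = 2 • z → x = y ∧ y = z) :
    A.card ≤ 3 * (Finset.univ.filter
      (fun α : Fin n → Fin p => 3 * ∑ i, (α i : ℕ) ≤ (p - 1) * n)).card := by
  classical
  haveI : Fact p.Prime := ⟨hp⟩
  have hslow : (Finset.univ.filter
      (fun α : Fin n → Fin p => 3 * ∑ i, (α i : ℕ) ≤ (p - 1) * n)) = slowF p n := rfl
  rw [hslow]
  set N := (slowF p n).card with hNdef
  have hN1 : 1 ≤ N := by
    refine Finset.card_pos.mpr ⟨fun _ => (⟨0, hp.pos⟩ : Fin p), ?_⟩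
    simp [slowF]
  rcases hp.eq_two_or_odd' with rfl | hodd
  · -- p = 2 : A has at most one element
    have hx : ∀ x : ZMod 2, x + x = 0 := fun x => CharTwo.add_self_eq_zero x
    have hA1 : A.card ≤ 1 := by
      refine Finset.card_le_one.mpr fun a ha b hb => ?_
      have h2 : a + a = 2 • b := by
        funext i
        show a i + a i = 2 • b i
        rw [two_smul, hx, hx]
      exact (hAP a ha a ha b hb h2).2
    omega
  · -- p odd
    have h2ne : (2 : ZMod p) ≠ 0 := by
      have h2 : ((2 : ℕ) : ZMod p) ≠ 0 := by
        rw [Ne, ZMod.natCast_eq_zero_iff]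
        intro hdvd
        have hp2 : p = 2 := (Nat.prime_dvd_prime_iff_eq hp Nat.prime_two).mp hdvd
        rw [hp2, Nat.odd_iff] at hodd
        omega
      simpa using h2
    have hinj : Function.Injective (fun a : Fin n → ZMod p => 2 • a) := by
      intro a b h
      funext i
      have h0 := congrFun h i
      simp only [Pi.smul_apply] at h0
      have h1 : (2 : ZMod p) * a i = (2 : ZMod p) * b i := by
        rw [two_mul, two_mul, ← two_smul (ZMod p), ← two_smul (ZMod p)]
        rw [show (2:ZMod p) • a i = 2 • a i by rw [two_smul, two_smul],
          show (2:ZMod p) • b i = 2 • b i by rw [two_smul, two_smul]]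
        exact h0
      exact mul_left_cancel₀ h2ne h1
    set A2 := A.image (fun a => 2 • a) with hA2def
    have hA2card : A2.card = A.card := Finset.card_image_of_injective _ hinj
    set U : Submodule (ZMod p) ((Fin n → ZMod p) → ZMod p) :=
      span (ZMod p) (mF p n '' (DsetF p n : Set (Fin n → Fin p))) with hU
    set Z : Submodule (ZMod p) ((Fin n → ZMod p) → ZMod p) := suppSub (ZMod p) A2 with hZdef
    set W := U ⊓ Z with hW
    set d := finrank (ZMod p) ((Fin n → ZMod p) → ZMod p) with hd
    have hUge : d ≤ finrank (ZMod p) U + N := by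
      set R2 : Submodule (ZMod p) ((Fin n → ZMod p) → ZMod p) :=
        span (ZMod p) (((Finset.univ \ DsetF p n).image (mF p n) :
          Finset ((Fin n → ZMod p) → ZMod p)) : Set ((Fin n → ZMod p) → ZMod p)) with hR2
      have htop : (⊤ : Submodule (ZMod p) ((Fin n → ZMod p) → ZMod p)) ≤ U ⊔ R2 := by
        rw [← span_mF_top, span_le]
        rintro _ ⟨α, rfl⟩
        by_cases hα : α ∈ DsetF p n
        · exact Submodule.mem_sup_left (subset_span ⟨α, hα, rfl⟩)
        · refine Submodule.mem_sup_right (subset_span ?_)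
          rw [Finset.coe_image]
          exact ⟨α, by simp [hα], rfl⟩
      have h1 : d = finrank (ZMod p) (⊤ : Submodule (ZMod p) ((Fin n → ZMod p) → ZMod p)) :=
        (finrank_top _ _).symm
      have h2 := Submodule.finrank_mono htop
      have h3 := Submodule.finrank_add_le_finrank_add_finrank U R2
      have h4 : finrank (ZMod p) R2 ≤ N := by
        calc finrank (ZMod p) R2 ≤ ((Finset.univ \ DsetF p n).image (mF p n)).card :=
              finrank_span_finset_le_card _
          _ ≤ (Finset.univ \ DsetF p n).card := Finset.card_image_le
          _ ≤ N := card_compl_Dset hp.pos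
      omega
    have hZge : A.card ≤ finrank (ZMod p) Z := by
      rw [← hA2card]
      exact card_le_finrank_suppSub A2
    have hWle : finrank (ZMod p) W ≤ 2 * N := by
      obtain ⟨f, hfW, hfsupp⟩ := exists_max_support W
      have hfU : f ∈ U := (Submodule.mem_inf.mp hfW).1
      have hfZ : ∀ v, v ∉ A2 → f v = 0 := (Submodule.mem_inf.mp hfW).2
      set T := A.filter (fun a => f (2 • a) ≠ 0) with hT
      have hsuppT : (Finset.univ.filter (fun v => f v ≠ 0)) ⊆ T.image (fun a => 2 • a) := by
        intro v hv
        have hvne : f v ≠ 0 := by simpa using hv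
        have hvA2 : v ∈ A2 := by
          by_contra h
          exact hvne (hfZ v h)
        obtain ⟨a, haA, rfl⟩ := Finset.mem_image.mp hvA2
        exact Finset.mem_image.mpr ⟨a, Finset.mem_filter.mpr ⟨haA, hvne⟩, rfl⟩
      have hrankT : finrank (ZMod p) W ≤ T.card :=
        hfsupp.trans ((Finset.card_le_card hsuppT).trans Finset.card_image_le)
      obtain ⟨u, v, hdec⟩ := decomp hp.pos f hfU
      set h : (↥(slowF p n) ⊕ ↥(slowF p n)) → ((Fin n → ZMod p) → ZMod p) :=
        Sum.elim (fun β => u β.1) (fun γ => mF p n γ.1) with hh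
      set Q := span (ZMod p) (Set.range h) with hQ
      haveI : FiniteDimensional (ZMod p) Q :=
        FiniteDimensional.span_of_finite _ (Set.finite_range h)
      set g : ↥T → ((Fin n → ZMod p) → ZMod p) := fun a => fun y => f (a.1 + y) with hg
      have hgQ : ∀ a : ↥T, g a ∈ Q := by
        intro a
        have hfn : g a = (∑ β ∈ (slowF p n).attach, mF p n β.1 a.1 • u β.1) +
            (∑ γ ∈ (slowF p n).attach, v γ.1 a.1 • mF p n γ.1) := by
          funext y
          have hdy := hdec a.1 y
          simp only [hg, hdy, Pi.add_apply, Finset.sum_apply, Pi.smul_apply, smul_eq_mul]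
          rw [← Finset.sum_attach (slowF p n) (fun β => mF p n β a.1 * u β y),
            ← Finset.sum_attach (slowF p n) (fun γ => v γ a.1 * mF p n γ y)]
        rw [hfn]
        refine Submodule.add_mem _ (Submodule.sum_mem _ fun β _ => ?_)
          (Submodule.sum_mem _ fun γ _ => ?_)
        · exact Submodule.smul_mem _ _ (subset_span ⟨Sum.inl β, rfl⟩)
        · exact Submodule.smul_mem _ _ (subset_span ⟨Sum.inr γ, rfl⟩)
      have hzero : ∀ a ∈ A, ∀ b ∈ A, a ≠ b → f (a + b) = 0 := by
        intro a ha b hb hab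
        by_contra hne
        have hmem : a + b ∈ A2 := by
          by_contra hmem
          exact hne (hfZ _ hmem)
        obtain ⟨c, hcA, hc⟩ := Finset.mem_image.mp hmem
        exact hab (hAP a ha b hb c hcA hc.symm).1
      have hgind : LinearIndependent (ZMod p) g := by
        rw [Fintype.linearIndependent_iff]
        intro c hc b
        have hcb := congrFun hc b.1
        simp only [Finset.sum_apply, Pi.smul_apply, smul_eq_mul, Pi.zero_apply] at hcb
        have hsingle : ∑ a : ↥T, c a * g a b.1 = c b * g b b.1 := by
          refine Finset.sum_eq_single b (fun a _ hab => ?_) (by simp)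
          have haA : a.1 ∈ A := (Finset.mem_filter.mp a.2).1
          have hbA : b.1 ∈ A := (Finset.mem_filter.mp b.2).1
          have hne : a.1 ≠ b.1 := fun hq => hab (Subtype.ext hq)
          rw [show g a b.1 = f (a.1 + b.1) from rfl, hzero a.1 haA b.1 hbA hne, mul_zero]
        rw [hsingle] at hcb
        have hfb : g b b.1 ≠ 0 := by
          have hb2 := (Finset.mem_filter.mp b.2).2
          have h2b : (2 : ℕ) • (b.1 : Fin n → ZMod p) = b.1 + b.1 := two_smul ℕ (b.1)
          show f (b.1 + b.1) ≠ 0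
          rw [← h2b]
          exact hb2
        exact (mul_eq_zero.mp hcb).resolve_right hfb
      have hTcard : T.card ≤ finrank (ZMod p) Q := by
        set g' : ↥T → ↥Q := fun a => ⟨g a, hgQ a⟩ with hg'
        have hcomp : g = (Q.subtype) ∘ g' := rfl
        have hind' : LinearIndependent (ZMod p) g' :=
          LinearIndependent.of_comp Q.subtype (hcomp ▸ hgind)
        calc T.card = Fintype.card ↥T := (Fintype.card_coe T).symm
          _ ≤ finrank (ZMod p) Q := hind'.fintype_card_le_finrank
      have hQle : finrank (ZMod p) Q ≤ 2 * N := by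
        calc finrank (ZMod p) Q ≤ Fintype.card (↥(slowF p n) ⊕ ↥(slowF p n)) :=
              finrank_range_le_card h
          _ = 2 * N := by
            rw [Fintype.card_sum, Fintype.card_coe]
            ring
      omega
    have hsum : finrank (ZMod p) (U ⊔ Z : Submodule (ZMod p) ((Fin n → ZMod p) → ZMod p)) +
        finrank (ZMod p) W = finrank (ZMod p) U + finrank (ZMod p) Z :=
      Submodule.finrank_sup_add_finrank_inf_eq U Z
    have hle : finrank (ZMod p) (U ⊔ Z : Submodule (ZMod p) ((Fin n → ZMod p) → ZMod p)) ≤ d :=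
      Submodule.finrank_le _
    omega
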